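/- Let ξ : [0,∞) → ℝ be continuous with ξ(0) = 0, and suppose there exist constants 0 ≤ α ≤ β < 1 and γ > 0 such that ∫ₐʳ (α − ξ(s))/s ds ≤ γ and ∫ₐʳ (ξ(s) − β)/s ds ≤ γ for all 0 < a < r. Define h(r) = C·exp(-∫₀ʳ ξ(s)/s ds) with C > 0 and h_k(r) = (1/k)·h(r/k) for k ≥ 1. Then for all k ≥ 1 and r > 0: e^{-γ}·k^{α−1} ≤ h_k(r)/h(r) ≤ e^{γ}·k^{β−1}. -/

import Mathlib

open MeasureTheory intervalIntegral

/-- under condition (c1), the rescaled profiles `h_k` are comparable to `h`. -/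
theorem stmt_1 (ξ : ℝ → ℝ) (hξc : Continuous ξ) (hξ0 : ξ 0 = 0)
    (hint : ∀ r > (0:ℝ), IntervalIntegrable (fun s => ξ s / s) volume 0 r)
    (α β γ : ℝ) (hα : 0 ≤ α) (hαβ : α ≤ β) (hβ : β < 1) (hγ : 0 < γ)
    (hc1a : ∀ a r : ℝ, 0 < a → a < r → (∫ s in a..r, (α - ξ s) / s) ≤ γ)
    (hc1b : ∀ a r : ℝ, 0 < a → a < r → (∫ s in a..r, (ξ s - β) / s) ≤ γ)
    (C : ℝ) (hC : 0 < C)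
    (h : ℝ → ℝ) (hh : ∀ r, h r = C * Real.exp (-∫ s in (0:ℝ)..r, ξ s / s))
    (hk : ℝ → ℝ → ℝ) (hhk : ∀ k r, hk k r = (1 / k) * h (r / k)) :
    ∀ k : ℝ, 1 ≤ k → ∀ r > (0:ℝ),
      Real.exp (-γ) * k ^ (α - 1) ≤ hk k r / h r ∧
      hk k r / h r ≤ Real.exp γ * k ^ (β - 1) := by
  intro k hk1 r hr
  have hk0 : (0:ℝ) < k := lt_of_lt_of_le one_pos hk1
  have ha : 0 < r / k := div_pos hr hk0
  have hle : r / k ≤ r := div_le_self hr.le hk1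
  have huIcc : Set.uIcc (r / k) r = Set.Icc (r / k) r := Set.uIcc_of_le hle
  have hne : ∀ x ∈ Set.uIcc (r / k) r, x ≠ 0 := by
    intro x hx
    rw [huIcc] at hx
    exact (ha.trans_le hx.1).ne'
  have hint2 : IntervalIntegrable (fun s => ξ s / s) volume (r / k) r := by
    apply ContinuousOn.intervalIntegrable
    exact hξc.continuousOn.div continuousOn_id hne
  have hinv : IntervalIntegrable (fun s => 1 / s) volume (r / k) r := by
    apply ContinuousOn.intervalIntegrable
    exact continuousOn_const.div continuousOn_id hne
  have hsplit : (∫ s in (0:ℝ)..(r / k), ξ s / s) + (∫ s in (r / k)..r, ξ s / s)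
      = ∫ s in (0:ℝ)..r, ξ s / s :=
    integral_add_adjacent_intervals (hint _ ha) hint2
  set I : ℝ := ∫ s in (r / k)..r, ξ s / s with hI
  have hratio : hk k r / h r = (1 / k) * Real.exp I := by
    rw [hhk, hh, hh, ← hsplit]
    rw [neg_add, Real.exp_add, Real.exp_neg, Real.exp_neg]
    have e1 := Real.exp_ne_zero (∫ s in (0:ℝ)..(r / k), ξ s / s)
    have e2 := Real.exp_ne_zero I
    field_simp
  have hlogk : 0 ≤ Real.log k := Real.log_nonneg hk1
  rcases eq_or_lt_of_le hk1 with heq | hlt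
  · -- k = 1
    subst heq
    rw [hratio]
    have : I = 0 := by
      rw [hI]
      simp
    rw [this]
    simp [Real.one_rpow]
    linarith
  · -- 1 < k
    have harlt : r / k < r := div_lt_self hr hlt
    have hdiv : r / (r / k) = k := by field_simp
    have hlog : (∫ s in (r / k)..r, 1 / s) = Real.log k := by
      rw [integral_one_div (fun h0 => hne 0 h0 rfl), hdiv]
    have hupper : I ≤ γ + β * Real.log k := by
      have h1 : (∫ s in (r / k)..r, (ξ s - β) / s) ≤ γ := hc1b _ _ ha harlt
      have h2 : (∫ s in (r / k)..r, (ξ s - β) / s) = I - β * Real.log k := by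
        have heq' : ∀ s ∈ Set.uIcc (r / k) r, (ξ s - β) / s = ξ s / s - β * (1 / s) := by
          intro s hs
          rw [sub_div, mul_one_div]
        rw [integral_congr heq', integral_sub hint2 (hinv.const_mul β),
          intervalIntegral.integral_const_mul, hlog]
      linarith
    have hlower : α * Real.log k - γ ≤ I := by
      have h1 : (∫ s in (r / k)..r, (α - ξ s) / s) ≤ γ := hc1a _ _ ha harlt
      have h2 : (∫ s in (r / k)..r, (α - ξ s) / s) = α * Real.log k - I := by
        have heq' : ∀ s ∈ Set.uIcc (r / k) r, (α - ξ s) / s = α * (1 / s) - ξ s / s := by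
          intro s hs
          rw [sub_div, mul_one_div]
        rw [integral_congr heq', integral_sub (hinv.const_mul α) hint2,
          intervalIntegral.integral_const_mul, hlog]
      linarith
    have hone1 : (1:ℝ) / k = Real.exp (-Real.log k) := by
      rw [Real.exp_neg, Real.exp_log hk0, one_div]
    rw [hratio, hone1, Real.rpow_def_of_pos hk0, Real.rpow_def_of_pos hk0,
      ← Real.exp_add, ← Real.exp_add, ← Real.exp_add]
    have e1 : Real.log k * (α - 1) = α * Real.log k - Real.log k := by ring
    have e2 : Real.log k * (β - 1) = β * Real.log k - Real.log k := by ring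
    constructor
    · exact Real.exp_le_exp.2 (by rw [e1]; linarith)
    · exact Real.exp_le_exp.2 (by rw [e2]; linarith)
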